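/- arXiv:2210.15171 — 2 statements merged into one kernel-verified Lean document; each statement's English description precedes it below -/
import Mathlib

section
/- Let A be a nonsingular M-tensor and b ≥ 0. Suppose b^{(k)} > 0 is a componentwise monotonically decreasing sequence converging to b, and let x^{(k)} be the unique positive solution of A x^{m-1} = b^{(k)}. Then x^{(k)} is monotonically decreasing and converges to the maximal nonnegative solution x_max(A,b) of A x^{m-1} = b. -/
open Finset Filter

noncomputable section

/-- Action of an order-(p+1) tensor (p trailing indices):
`(A x^{p})_i = ∑ a_{i i₂ … i_{p+1}} x_{i₂} ⋯ x_{i_{p+1}}`. -/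
def tapp (p n : ℕ) (A : Fin n → (Fin p → Fin n) → ℝ) (x : Fin n → ℝ) : Fin n → ℝ :=
  fun i => ∑ js : Fin p → Fin n, A i js * ∏ j, x (js j)

/-- A `Z`-tensor: all off-diagonal entries are nonpositive. -/
def IsZTensor (p n : ℕ) (A : Fin n → (Fin p → Fin n) → ℝ) : Prop :=
  ∀ i js, (∃ j, js j ≠ i) → A i js ≤ 0

/-- The identity tensor. -/
def identT (p n : ℕ) : Fin n → (Fin p → Fin n) → ℝ :=
  fun i js => if ∀ j, js j = i then 1 else 0

/-- Spectral radius of a tensor: sup of moduli of (real) eigenvalues. -/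
def tensorSpecRad (p n : ℕ) (B : Fin n → (Fin p → Fin n) → ℝ) : ℝ :=
  sSup {r : ℝ | ∃ lam : ℝ, ∃ x : Fin n → ℝ, x ≠ 0 ∧
    (∀ i, tapp p n B x i = lam * x i ^ p) ∧ r = |lam|}

/-- A nonsingular M-tensor: `A = s I − B` with `B ≥ 0` and `s > ρ(B)`. -/
def IsMTensor (p n : ℕ) (A : Fin n → (Fin p → Fin n) → ℝ) : Prop :=
  ∃ s : ℝ, ∃ B : Fin n → (Fin p → Fin n) → ℝ,
    (∀ i js, 0 ≤ B i js) ∧ tensorSpecRad p n B < s ∧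
    ∀ i js, A i js = s * identT p n i js - B i js

/-- The diagonal-part tensor of `A`. -/
def diagT (p n : ℕ) (A : Fin n → (Fin p → Fin n) → ℝ) : Fin n → (Fin p → Fin n) → ℝ :=
  fun i js => if ∀ j, js j = i then A i (fun _ => i) else 0

/-- The majorization matrix of `A`: `M_{ij} = a_{i j … j}`. -/
def majMatrix (p n : ℕ) (A : Fin n → (Fin p → Fin n) → ℝ) : Matrix (Fin n) (Fin n) ℝ :=
  fun i j => A i (fun _ => j)

/-- The "mixed index" part `N = M_tensor − A`: zero on constant trailing tuples,
`−A` elsewhere. -/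
def NPart (p n : ℕ) (A : Fin n → (Fin p → Fin n) → ℝ) : Fin n → (Fin p → Fin n) → ℝ :=
  fun i js => if ∀ j' j'', js j' = js j'' then 0 else -A i js

/-- A nonsingular M-matrix: a Z-matrix with `M y > 0` for some `y > 0`. -/
def IsMMatrix (n : ℕ) (P : Matrix (Fin n) (Fin n) ℝ) : Prop :=
  (∀ i j, i ≠ j → P i j ≤ 0) ∧ ∃ y : Fin n → ℝ, (∀ i, 0 < y i) ∧ ∀ i, 0 < P.mulVec y i

/-- Spectral radius of a real matrix (via its complex spectrum). -/
def matSpecRad (n : ℕ) (J : Matrix (Fin n) (Fin n) ℝ) : ℝ :=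
  sSup {r : ℝ | ∃ μ ∈ spectrum ℂ (J.map (Complex.ofReal ·)), r = ‖μ‖}

/-- Irreducibility of a matrix. -/
def MatIrreducible (n : ℕ) (J : Matrix (Fin n) (Fin n) ℝ) : Prop :=
  ∀ S : Finset (Fin n), S.Nonempty → S ≠ Finset.univ → ∃ i ∈ S, ∃ j, j ∉ S ∧ J i j ≠ 0


lemma tapp_split (p n : ℕ) (s : ℝ) (B A : Fin n → (Fin p → Fin n) → ℝ)
    (hAB : ∀ i js, A i js = s * identT p n i js - B i js) (x : Fin n → ℝ) (i : Fin n) :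
    tapp p n A x i = s * x i ^ p - tapp p n B x i := by
  have hid : ∑ js : Fin p → Fin n, identT p n i js * ∏ j, x (js j) = x i ^ p := by
    rw [Fintype.sum_eq_single (fun _ => i)]
    · simp [identT]
    · intro js hjs
      have : ¬ ∀ j, js j = i := fun h => hjs (funext h)
      simp [identT, this]
  simp only [tapp]
  rw [← hid, Finset.mul_sum, ← Finset.sum_sub_distrib]
  congr 1; ext js; rw [hAB]; ring

lemma comp_lemma (p n : ℕ) (hp : 1 ≤ p) (s : ℝ) (B A : Fin n → (Fin p → Fin n) → ℝ)
    (hB : ∀ i js, 0 ≤ B i js)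
    (hAB : ∀ i js, A i js = s * identT p n i js - B i js)
    (x y c d : Fin n → ℝ) (hx : ∀ i, 0 < x i) (hy : ∀ i, 0 ≤ y i)
    (hxd : tapp p n A x = d) (hyc : tapp p n A y = c)
    (hcd : c ≤ d) (hd : ∀ i, 0 < d i) : y ≤ x := by
  cases isEmpty_or_nonempty (Fin n) with
  | inl h => intro i; exact h.elim i
  | inr h =>
    obtain ⟨i0, -, hi0⟩ := Finset.exists_max_image Finset.univ (fun i => y i / x i)
      Finset.univ_nonempty
    set t := y i0 / x i0 with ht
    by_cases htle : t ≤ 1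
    · intro j
      have := hi0 j (Finset.mem_univ j)
      have := (div_le_one (hx j)).mp (this.trans htle)
      exact this
    · push_neg at htle
      exfalso
      have hxi0 : y i0 = t * x i0 := (div_mul_cancel₀ _ (hx i0).ne').symm
      have hyt : ∀ j, y j ≤ t * x j := fun j => by
        have := hi0 j (Finset.mem_univ j)
        calc y j = (y j / x j) * x j := (div_mul_cancel₀ _ (hx j).ne').symm
          _ ≤ t * x j := mul_le_mul_of_nonneg_right this (hx j).le
      have hBle : tapp p n B y i0 ≤ t ^ p * tapp p n B x i0 := by
        simp only [tapp]
        rw [Finset.mul_sum]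
        apply Finset.sum_le_sum
        intro js _
        have hprod : ∏ j, y (js j) ≤ t ^ p * ∏ j, x (js j) := by
          calc ∏ j, y (js j) ≤ ∏ j, (t * x (js j)) :=
              Finset.prod_le_prod (fun j _ => hy _) (fun j _ => hyt _)
            _ = t ^ p * ∏ j, x (js j) := by
              rw [Finset.prod_mul_distrib, Finset.prod_const]
              simp
        calc B i0 js * ∏ j, y (js j) ≤ B i0 js * (t ^ p * ∏ j, x (js j)) :=
            mul_le_mul_of_nonneg_left hprod (hB i0 js)
          _ = t ^ p * (B i0 js * ∏ j, x (js j)) := by ring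
      have hc : c i0 = s * (t * x i0) ^ p - tapp p n B y i0 := by
        rw [← hyc, tapp_split p n s B A hAB, hxi0]
      have hdx : d i0 = s * x i0 ^ p - tapp p n B x i0 := by
        rw [← hxd, tapp_split p n s B A hAB]
      have hkey : t ^ p * d i0 ≤ c i0 := by
        rw [hc, hdx, mul_pow]
        nlinarith [hBle]
      have htp : 1 < t ^ p := one_lt_pow₀ htle (by omega)
      have : d i0 < c i0 := by nlinarith [hd i0]
      exact absurd (hcd i0) (not_le.mpr this)

lemma tapp_continuous (p n : ℕ) (A : Fin n → (Fin p → Fin n) → ℝ) (i : Fin n) :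
    Continuous fun x : Fin n → ℝ => tapp p n A x i := by
  unfold tapp
  exact continuous_finset_sum _ fun js _ =>
    continuous_const.mul (continuous_finset_prod _ fun j _ => continuous_apply _)

/-- if `b⁽ᵏ⁾ > 0` decreases to `b ≥ 0` and `x⁽ᵏ⁾` is the unique positive
solution of `A x^{m-1} = b⁽ᵏ⁾`, then `x⁽ᵏ⁾` decreases and converges to the maximal
nonnegative solution of `A x^{m-1} = b`. -/
theorem stmt10 (m n : ℕ) (hm : 2 ≤ m) (A : Fin n → (Fin (m-1) → Fin n) → ℝ)
    (hA : IsMTensor (m-1) n A) (b : Fin n → ℝ) (hb : 0 ≤ b)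
    (bs : ℕ → Fin n → ℝ) (hbpos : ∀ k i, 0 < bs k i)
    (hbdec : ∀ k, bs (k+1) ≤ bs k)
    (hblim : Filter.Tendsto bs Filter.atTop (nhds b))
    (xs : ℕ → Fin n → ℝ) (hxpos : ∀ k i, 0 < xs k i)
    (hxsol : ∀ k, tapp (m-1) n A (xs k) = bs k)
    (huniq : ∀ k, ∀ y : Fin n → ℝ, (∀ i, 0 < y i) →
      tapp (m-1) n A y = bs k → y = xs k) :
    (∀ k, xs (k+1) ≤ xs k) ∧
    ∃ xmax : Fin n → ℝ, 0 ≤ xmax ∧ tapp (m-1) n A xmax = b ∧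
      (∀ y : Fin n → ℝ, 0 ≤ y → tapp (m-1) n A y = b → y ≤ xmax) ∧
      Filter.Tendsto xs Filter.atTop (nhds xmax) := by
  have hp : 1 ≤ m - 1 := by omega
  obtain ⟨s, B, hB, -, hAB⟩ := hA
  have hmono : ∀ k, xs (k+1) ≤ xs k := fun k =>
    comp_lemma (m-1) n hp s B A hB hAB (xs k) (xs (k+1)) (bs (k+1)) (bs k)
      (hxpos k) (fun i => (hxpos (k+1) i).le) (hxsol k) (hxsol (k+1))
      (hbdec k) (hbpos k)
  have hxanti : ∀ i, Antitone fun k => xs k i :=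
    fun i => antitone_nat_of_succ_le fun k => hmono k i
  have hbanti : Antitone bs := antitone_nat_of_succ_le hbdec
  have hble : ∀ k, b ≤ bs k := by
    intro k i
    have hlim : Tendsto (fun j => bs j i) atTop (nhds (b i)) :=
      ((continuous_apply i).tendsto b).comp hblim
    exact le_of_tendsto hlim (Filter.eventually_atTop.mpr
      ⟨k, fun j hj => hbanti hj i⟩)
  set xmax : Fin n → ℝ := fun i => ⨅ k, xs k i with hxmax
  have hbdd : ∀ i, BddBelow (Set.range fun k => xs k i) :=
    fun i => ⟨0, by rintro _ ⟨k, rfl⟩; exact (hxpos k i).le⟩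
  have htendi : ∀ i, Tendsto (fun k => xs k i) atTop (nhds (xmax i)) :=
    fun i => tendsto_atTop_ciInf (hxanti i) (hbdd i)
  have htend : Tendsto xs atTop (nhds xmax) := tendsto_pi_nhds.mpr htendi
  have hsol : tapp (m-1) n A xmax = b := by
    funext i
    have h1 : Tendsto (fun k => tapp (m-1) n A (xs k) i) atTop
        (nhds (tapp (m-1) n A xmax i)) :=
      ((tapp_continuous (m-1) n A i).tendsto xmax).comp htend
    have h2 : Tendsto (fun k => tapp (m-1) n A (xs k) i) atTop (nhds (b i)) := by
      have : (fun k => tapp (m-1) n A (xs k) i) = fun k => bs k i := by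
        funext k; rw [hxsol k]
      rw [this]
      exact ((continuous_apply i).tendsto b).comp hblim
    exact tendsto_nhds_unique h1 h2
  refine ⟨hmono, xmax, fun i => le_ciInf fun k => (hxpos k i).le, hsol, ?_, htend⟩
  intro y hy hysol i
  refine le_ciInf fun k => ?_
  exact comp_lemma (m-1) n hp s B A hB hAB (xs k) y b (bs k)
    (hxpos k) hy (hxsol k) hysol (hble k) (hbpos k) i


end
end

section
/- Under the setup of the maximal-solution splitting iteration (nonsingular M-tensor A, M = P − Q = P̂ − Q̂ splittings of the majorization matrix with P, P̂ nonsingular M-matrices and Q, Q̂ ≥ 0, A = M_tensor − N with N ≥ 0): let (x_k) and (x̂_k) be the respective iterates with x_0 ≥ x̂_0 > 0, A x_0^{m-1} > 0, A x_0^{m-1} ≥ b, A x̂_0^{m-1} > 0, A x̂_0^{m-1} ≥ b. If Q̂ ≤ Q entrywise, then x_k ≥ x̂_k for all k ≥ 0. -/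
open Finset Filter

noncomputable section

/-- Inverse positivity for M-matrices (in the semipositive form). -/
lemma mmat_invpos {n : ℕ} {P : Matrix (Fin n) (Fin n) ℝ} (hP : IsMMatrix n P)
    {d : Fin n → ℝ} (hd : ∀ i, 0 ≤ P.mulVec d i) : ∀ i, 0 ≤ d i := by
  obtain ⟨hz, y, hy, hPy⟩ := hP
  by_contra hc
  push_neg at hc
  obtain ⟨i1, hi1⟩ := hc
  obtain ⟨i0, -, hi0⟩ := Finset.exists_max_image Finset.univ (fun i => -d i / y i)
    ⟨i1, Finset.mem_univ i1⟩
  set t := -d i0 / y i0 with ht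
  have hty : 0 < t := lt_of_lt_of_le (div_pos (by linarith) (hy i1)) (hi0 i1 (Finset.mem_univ i1))
  set z : Fin n → ℝ := fun j => d j + t * y j with hz'
  have hznn : ∀ j, 0 ≤ z j := by
    intro j
    have h1 : -d j / y j ≤ t := hi0 j (Finset.mem_univ j)
    have h2 : -d j ≤ t * y j := by
      rw [div_le_iff₀ (hy j)] at h1; linarith [h1]
    simp only [hz']; linarith
  have hzi0 : z i0 = 0 := by
    simp only [hz', ht]
    rw [div_mul_cancel₀ _ (hy i0).ne']
    ring
  have hlin : P.mulVec z i0 = P.mulVec d i0 + t * P.mulVec y i0 := by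
    simp only [Matrix.mulVec, dotProduct, hz']
    rw [Finset.mul_sum, ← Finset.sum_add_distrib]
    exact Finset.sum_congr rfl fun j _ => by ring
  have hpos : 0 < P.mulVec z i0 := by
    rw [hlin]
    have := hd i0
    have := hPy i0
    nlinarith
  have hneg : P.mulVec z i0 ≤ 0 := by
    show ∑ j, P i0 j * z j ≤ 0
    apply Finset.sum_nonpos
    intro j _
    by_cases hj : j = i0
    · subst hj; rw [hzi0]; simp
    · exact mul_nonpos_of_nonpos_of_nonneg (hz i0 j (Ne.symm hj)) (hznn j)
  linarith

/-- Monotonicity of the tensor action for entrywise nonnegative tensors. -/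
lemma tapp_mono {p n : ℕ} {T : Fin n → (Fin p → Fin n) → ℝ} (hT : ∀ i js, 0 ≤ T i js)
    {x y : Fin n → ℝ} (hx : ∀ i, 0 ≤ x i) (hxy : ∀ i, x i ≤ y i) :
    ∀ i, tapp p n T x i ≤ tapp p n T y i := by
  intro i
  apply Finset.sum_le_sum
  intro js _
  exact mul_le_mul_of_nonneg_left
    (Finset.prod_le_prod (fun j _ => hx _) (fun j _ => hxy _)) (hT i js)

/-- For an M-tensor, the mixed part is entrywise nonnegative. -/
lemma npart_nonneg {p n : ℕ} {A : Fin n → (Fin p → Fin n) → ℝ} (hA : IsMTensor p n A) :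
    ∀ i js, 0 ≤ NPart p n A i js := by
  obtain ⟨s, B, hB, -, hAeq⟩ := hA
  intro i js
  unfold NPart
  split
  · exact le_refl _
  · rename_i h
    push_neg at h
    obtain ⟨j', j'', hne⟩ := h
    rw [hAeq]
    have hid : identT p n i js = 0 := by
      unfold identT
      rw [if_neg]
      intro hall
      exact hne (by rw [hall j', hall j''])
    rw [hid]
    have := hB i js
    linarith

/-- Splitting identity: `A x^p + N x = M (x^{[p]})` where `M` is the majorization
matrix and `N` the mixed part. -/
lemma tapp_split_s13 {p n : ℕ} (hp : 0 < p) (A : Fin n → (Fin p → Fin n) → ℝ)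
    (x : Fin n → ℝ) (i : Fin n) :
    tapp p n A x i + tapp p n (NPart p n A) x i
      = (majMatrix p n A).mulVec (fun j => x j ^ p) i := by
  unfold tapp NPart majMatrix
  show _ = ∑ j, A i (fun _ => j) * x j ^ p
  rw [← Finset.sum_add_distrib]
  have h1 : ∀ js : Fin p → Fin n,
      A i js * ∏ j, x (js j)
        + (if ∀ j' j'', js j' = js j'' then 0 else -A i js) * ∏ j, x (js j)
      = if ∀ j' j'', js j' = js j'' then A i js * ∏ j, x (js j) else 0 := by
    intro js; split <;> ring
  rw [Finset.sum_congr rfl fun js _ => h1 js, ← Finset.sum_filter]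
  refine Finset.sum_bij' (i := fun js _ => js ⟨0, hp⟩) (j := fun j _ => (fun _ => j))
    ?hi ?hj ?left ?right ?h
  case hi => intro js _; exact Finset.mem_univ _
  case hj =>
    intro j _
    simp only [Finset.mem_filter, Finset.mem_univ, true_and]
    exact fun _ _ => trivial
  case left =>
    intro js hjs
    simp only [Finset.mem_filter] at hjs
    funext j; exact (hjs.2 j ⟨0, hp⟩).symm
  case right => intro j _; rfl
  case h =>
    intro js hjs
    simp only [Finset.mem_filter] at hjs
    have hconst : (fun j => x (js j)) = fun _ => x (js ⟨0, hp⟩) := by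
      funext j; rw [hjs.2 j ⟨0, hp⟩]
    congr 1
    · congr 1; funext j; exact hjs.2 j ⟨0, hp⟩
    · rw [hconst, Finset.prod_const, Finset.card_univ, Fintype.card_fin]

/-- Entrywise-nonnegative matrices act monotonically. -/
lemma mulVec_mono {n : ℕ} {M : Matrix (Fin n) (Fin n) ℝ} (hM : ∀ i j, 0 ≤ M i j)
    {u v : Fin n → ℝ} (huv : ∀ j, u j ≤ v j) : ∀ i, M.mulVec u i ≤ M.mulVec v i := by
  intro i
  simp only [Matrix.mulVec, dotProduct]
  apply Finset.sum_le_sum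
  intro j _
  exact mul_le_mul_of_nonneg_left (huv j) (hM i j)

/-- comparison of two splittings for the decreasing (maximal-solution)
iteration: with `x₀ ≥ x̂₀ > 0`, `A x₀^{m-1} > 0`, `A x₀^{m-1} ≥ b` (and likewise for
`x̂₀`), if `Q̂ ≤ Q` entrywise then `x_k ≥ x̂_k` for all `k`. -/
theorem stmt13 (m n : ℕ) (hm : 2 ≤ m) (A : Fin n → (Fin (m-1) → Fin n) → ℝ)
    (hA : IsMTensor (m-1) n A) (b : Fin n → ℝ)
    (P Q Ph Qh : Matrix (Fin n) (Fin n) ℝ)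
    (hP : IsMMatrix n P) (hPh : IsMMatrix n Ph)
    (hQ : ∀ i j, 0 ≤ Q i j) (hQh : ∀ i j, 0 ≤ Qh i j)
    (hsplit : majMatrix (m-1) n A = P - Q)
    (hsplith : majMatrix (m-1) n A = Ph - Qh)
    (x xh : ℕ → Fin n → ℝ)
    (hx00 : ∀ i, 0 < xh 0 i) (hx0le : xh 0 ≤ x 0)
    (hAx0 : ∀ i, 0 < tapp (m-1) n A (x 0) i) (hAx0b : b ≤ tapp (m-1) n A (x 0))
    (hAxh0 : ∀ i, 0 < tapp (m-1) n A (xh 0) i) (hAxh0b : b ≤ tapp (m-1) n A (xh 0))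
    (hxpos : ∀ k, 0 ≤ x k) (hxhpos : ∀ k, 0 ≤ xh k)
    (hiter : ∀ k i, P.mulVec (fun j => x (k+1) j ^ (m-1)) i =
      Q.mulVec (fun j => x k j ^ (m-1)) i +
        tapp (m-1) n (NPart (m-1) n A) (x k) i + b i)
    (hiterh : ∀ k i, Ph.mulVec (fun j => xh (k+1) j ^ (m-1)) i =
      Qh.mulVec (fun j => xh k j ^ (m-1)) i +
        tapp (m-1) n (NPart (m-1) n A) (xh k) i + b i)
    (hQle : ∀ i j, Qh i j ≤ Q i j) :
    ∀ k, xh k ≤ x k := by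
  have hp : 0 < m - 1 := by omega
  have hN : ∀ i js, 0 ≤ NPart (m-1) n A i js := npart_nonneg hA
  have hPeq : ∀ v i, P.mulVec v i = (majMatrix (m-1) n A).mulVec v i + Q.mulVec v i := by
    intro v i
    rw [hsplit, Matrix.sub_mulVec]
    simp [Pi.sub_apply]
  have hPhmat : Ph = P - Q + Qh := by
    have h : P - Q = Ph - Qh := hsplit.symm.trans hsplith
    rw [h]; abel
  -- powers
  have hpowle : ∀ (u v : Fin n → ℝ), (∀ j, 0 ≤ u j) → (∀ j, 0 ≤ v j) →
      (∀ j, u j ^ (m-1) ≤ v j ^ (m-1)) → ∀ j, u j ≤ v j := by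
    intro u v hu hv h j
    exact (pow_le_pow_iff_left₀ (hu j) (hv j) (by omega)).mp (h j)
  have hpowmono : ∀ (u v : Fin n → ℝ), (∀ j, 0 ≤ u j) → (∀ j, u j ≤ v j) →
      ∀ j, u j ^ (m-1) ≤ v j ^ (m-1) := fun u v hu h j => pow_le_pow_left₀ (hu j) (h j) (m-1)
  -- Step 1: the x-sequence is decreasing
  have hdec : ∀ k j, x (k+1) j ≤ x k j := by
    intro k
    induction k with
    | zero =>
      have hkey : ∀ i, 0 ≤ P.mulVec (fun j => x 0 j ^ (m-1) - x 1 j ^ (m-1)) i := by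
        intro i
        have hlin : P.mulVec (fun j => x 0 j ^ (m-1) - x 1 j ^ (m-1)) i
            = P.mulVec (fun j => x 0 j ^ (m-1)) i - P.mulVec (fun j => x 1 j ^ (m-1)) i := by
          simp only [Matrix.mulVec, dotProduct]
          rw [← Finset.sum_sub_distrib]
          exact Finset.sum_congr rfl fun j _ => by ring
        rw [hlin, hPeq, hiter 0 i, ← tapp_split_s13 hp A (x 0) i]
        have := hAx0b i
        linarith
      exact hpowle _ _ (fun j => hxpos 1 j) (fun j => hxpos 0 j)
        (fun j => by linarith [mmat_invpos hP hkey j])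
    | succ k ih =>
      have hpowk : ∀ j, x (k+1) j ^ (m-1) ≤ x k j ^ (m-1) :=
        hpowmono _ _ (fun j => hxpos (k+1) j) ih
      have hkey : ∀ i, 0 ≤ P.mulVec (fun j => x (k+1) j ^ (m-1) - x (k+2) j ^ (m-1)) i := by
        intro i
        have hlin : P.mulVec (fun j => x (k+1) j ^ (m-1) - x (k+2) j ^ (m-1)) i
            = P.mulVec (fun j => x (k+1) j ^ (m-1)) i - P.mulVec (fun j => x (k+2) j ^ (m-1)) i := by
          simp only [Matrix.mulVec, dotProduct]
          rw [← Finset.sum_sub_distrib]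
          exact Finset.sum_congr rfl fun j _ => by ring
        rw [hlin, hiter k i, hiter (k+1) i]
        have h1 : Q.mulVec (fun j => x (k+1) j ^ (m-1)) i ≤ Q.mulVec (fun j => x k j ^ (m-1)) i :=
          mulVec_mono hQ hpowk i
        have h2 : tapp (m-1) n (NPart (m-1) n A) (x (k+1)) i ≤ tapp (m-1) n (NPart (m-1) n A) (x k) i :=
          tapp_mono hN (fun j => hxpos (k+1) j) ih i
        linarith
      exact hpowle _ _ (fun j => hxpos (k+2) j) (fun j => hxpos (k+1) j)
        (fun j => by linarith [mmat_invpos hP hkey j])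
  -- Step 2: comparison induction
  intro k
  induction k with
  | zero => exact hx0le
  | succ k ih =>
    have ih' : ∀ j, xh k j ≤ x k j := fun j => ih j
    have hpowk : ∀ j, xh k j ^ (m-1) ≤ x k j ^ (m-1) :=
      hpowmono _ _ (fun j => hxhpos k j) ih'
    have hpowdec : ∀ j, x (k+1) j ^ (m-1) ≤ x k j ^ (m-1) :=
      hpowmono _ _ (fun j => hxpos (k+1) j) (hdec k)
    have hkey : ∀ i, 0 ≤ Ph.mulVec (fun j => x (k+1) j ^ (m-1) - xh (k+1) j ^ (m-1)) i := by
      intro i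
      have hlin : Ph.mulVec (fun j => x (k+1) j ^ (m-1) - xh (k+1) j ^ (m-1)) i
          = Ph.mulVec (fun j => x (k+1) j ^ (m-1)) i - Ph.mulVec (fun j => xh (k+1) j ^ (m-1)) i := by
        simp only [Matrix.mulVec, dotProduct]
        rw [← Finset.sum_sub_distrib]
        exact Finset.sum_congr rfl fun j _ => by ring
      have hPhv : ∀ v : Fin n → ℝ, Ph.mulVec v i
          = P.mulVec v i - Q.mulVec v i + Qh.mulVec v i := by
        intro v
        rw [hPhmat, Matrix.add_mulVec, Matrix.sub_mulVec]
        simp [Pi.sub_apply, Pi.add_apply]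
      rw [hlin, hPhv, hiter k i, hiterh k i]
      -- facts
      have f1 : Qh.mulVec (fun j => xh k j ^ (m-1)) i ≤ Qh.mulVec (fun j => x k j ^ (m-1)) i :=
        mulVec_mono hQh hpowk i
      have f3 : tapp (m-1) n (NPart (m-1) n A) (xh k) i ≤ tapp (m-1) n (NPart (m-1) n A) (x k) i :=
        tapp_mono hN (fun j => hxhpos k j) ih' i
      -- (Q - Qh) monotone between x_{k+1}^(m-1) and x_k^(m-1)
      have f2 : Q.mulVec (fun j => x (k+1) j ^ (m-1)) i - Qh.mulVec (fun j => x (k+1) j ^ (m-1)) i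
          ≤ Q.mulVec (fun j => x k j ^ (m-1)) i - Qh.mulVec (fun j => x k j ^ (m-1)) i := by
        have := mulVec_mono (M := Q - Qh)
          (fun i j => by simp [Matrix.sub_apply]; linarith [hQle i j]) hpowdec i
        rwa [Matrix.sub_mulVec, Matrix.sub_mulVec, Pi.sub_apply, Pi.sub_apply] at this
      linarith
    intro j
    have h1 : 0 ≤ x (k+1) j ^ (m-1) - xh (k+1) j ^ (m-1) := mmat_invpos hPh hkey j
    have hm1 : m - 1 ≠ 0 := by omega
    exact (pow_le_pow_iff_left₀ (hxhpos (k+1) j) (hxpos (k+1) j) hm1).mp (by linarith)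

end
end
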